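/- Let a ∈ ℝ, m₁, m₂, f ∈ ℝ, m̂ᵢ = √(1+a²)·mᵢ, Z̃₁ = (0,a), Z̃₂ = (0,−a). Suppose q̃ = (x̃,ỹ) : I → ℝ² \ {Z̃₁, Z̃₂} is a C² solution of the planar Lagrange equation d²q̃/dt² = −m₁‖q̃−Z̃₁‖_a^{−3}(q̃−Z̃₁) − m₂‖q̃−Z̃₂‖_a^{−3}(q̃−Z̃₂) + 2f·q̃. Then the spherical energy E_sp(x̃,ỹ,dx̃/dt,dỹ/dt) := [(1+ỹ²)(dx̃/dt)² − 2x̃ỹ(dx̃/dt)(dỹ/dt) + (1+x̃²)(dỹ/dt)²]/2 − m̂₁(aỹ+1)/√((ỹ−a)² + (1+a²)x̃²) − m̂₂(1−aỹ)/√((ỹ+a)² + (1+a²)x̃²) − f(x̃² + ỹ²) is constant along the solution; i.e., E_sp is a first integral of the planar Lagrange problem. -/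

import Mathlib

noncomputable section

/-- The affine norm `‖(x,y)‖ₐ = √(x² + y²/(1+a²))` on the plane. -/
def normA (a : ℝ) (p : ℝ × ℝ) : ℝ := Real.sqrt (p.1 ^ 2 + p.2 ^ 2 / (1 + a ^ 2))

/-- The energy of the spherical Lagrange problem, expressed in the gnomonic
chart with planar time derivatives. -/
def Esp (a mhat₁ mhat₂ f x y u v : ℝ) : ℝ :=
  ((1 + y ^ 2) * u ^ 2 - 2 * x * y * u * v + (1 + x ^ 2) * v ^ 2) / 2
    - mhat₁ * (a * y + 1) / Real.sqrt ((y - a) ^ 2 + (1 + a ^ 2) * x ^ 2)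
    - mhat₂ * (1 - a * y) / Real.sqrt ((y + a) ^ 2 + (1 + a ^ 2) * x ^ 2)
    - f * (x ^ 2 + y ^ 2)

lemma hasDerivAt_fst' {F : ℝ → ℝ × ℝ} {F' : ℝ × ℝ} {s : ℝ} (h : HasDerivAt F F' s) :
    HasDerivAt (fun t => (F t).1) F'.1 s := by
  have h2 := (h.hasFDerivAt.fst).hasDerivAt
  simpa using h2

lemma hasDerivAt_snd' {F : ℝ → ℝ × ℝ} {F' : ℝ × ℝ} {s : ℝ} (h : HasDerivAt F F' s) :
    HasDerivAt (fun t => (F t).2) F'.2 s := by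
  have h2 := (h.hasFDerivAt.snd).hasDerivAt
  simpa using h2

lemma pot_hasDerivAt (mh c : ℝ) {x y : ℝ → ℝ} {U V s : ℝ}
    (hx : HasDerivAt x U s) (hy : HasDerivAt y V s)
    (hw : 0 < (y s - c) ^ 2 + (1 + c ^ 2) * (x s) ^ 2) :
    HasDerivAt (fun t => mh * (c * y t + 1) / Real.sqrt ((y t - c) ^ 2 + (1 + c ^ 2) * (x t) ^ 2))
      (mh * (1 + c ^ 2) * (c * V * (x s) ^ 2 - (y s - c) * V - (c * y s + 1) * (x s) * U)
        / (Real.sqrt ((y s - c) ^ 2 + (1 + c ^ 2) * (x s) ^ 2)) ^ 3) s := by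
  set A := 1 + c ^ 2 with hA
  set D := Real.sqrt ((y s - c) ^ 2 + A * (x s) ^ 2) with hD
  have hDpos : 0 < D := Real.sqrt_pos.mpr hw
  have hDsq : D ^ 2 = (y s - c) ^ 2 + A * (x s) ^ 2 := Real.sq_sqrt hw.le
  have hwd : HasDerivAt (fun t => (y t - c) ^ 2 + A * (x t) ^ 2)
      (2 * (y s - c) ^ 1 * V + A * (2 * (x s) ^ 1 * U)) s :=
    ((hy.sub_const c).pow 2).add (((hx.pow 2)).const_mul A)
  have hDd : HasDerivAt (fun t => Real.sqrt ((y t - c) ^ 2 + A * (x t) ^ 2))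
      ((2 * (y s - c) ^ 1 * V + A * (2 * (x s) ^ 1 * U)) / (2 * D)) s :=
    hwd.sqrt (by rw [← hDsq]; positivity)
  have hnum : HasDerivAt (fun t => mh * (c * y t + 1)) (mh * (c * V)) s :=
    ((hy.const_mul c).add_const 1).const_mul mh
  have hq := hnum.div hDd (ne_of_gt hDpos)
  refine hq.congr_deriv ?_
  symm
  rw [← hD]
  field_simp
  linear_combination (-(mh*c*V)) * hDsq

set_option maxHeartbeats 2000000 in
/-- The spherical energy `E_sp` is a first integral of the planar Lagrange
problem: it is constant along every solution. -/
theorem spherical_energy_first_integral_planar_lagrange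
    (a m₁ m₂ f mhat₁ mhat₂ : ℝ)
    (hm₁ : mhat₁ = Real.sqrt (1 + a ^ 2) * m₁)
    (hm₂ : mhat₂ = Real.sqrt (1 + a ^ 2) * m₂)
    (Zt₁ Zt₂ : ℝ × ℝ) (hZt₁ : Zt₁ = (0, a)) (hZt₂ : Zt₂ = (0, -a))
    (qt : ℝ → ℝ × ℝ) (hne₁ : ∀ s, qt s ≠ Zt₁) (hne₂ : ∀ s, qt s ≠ Zt₂)
    (hC2 : ContDiff ℝ 2 qt)
    (hODE : ∀ s, deriv (deriv qt) s
        = -(m₁ / (normA a (qt s - Zt₁)) ^ 3) • (qt s - Zt₁)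
          - (m₂ / (normA a (qt s - Zt₂)) ^ 3) • (qt s - Zt₂)
          + (2 * f) • qt s) :
    ∀ s₁ s₂ : ℝ,
      Esp a mhat₁ mhat₂ f (qt s₁).1 (qt s₁).2
        (deriv (fun u => (qt u).1) s₁) (deriv (fun u => (qt u).2) s₁)
      = Esp a mhat₁ mhat₂ f (qt s₂).1 (qt s₂).2
        (deriv (fun u => (qt u).1) s₂) (deriv (fun u => (qt u).2) s₂) := by
  subst hZt₁ hZt₂
  have hdiff : Differentiable ℝ qt ∧ Differentiable ℝ (deriv qt) := by
    have h := (contDiff_succ_iff_deriv (n := 1)).mp (by norm_num at hC2 ⊢; exact hC2)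
    exact ⟨h.1, h.2.2.differentiable one_ne_zero⟩
  obtain ⟨hdq, hd2⟩ := hdiff
  have hApos : 0 < 1 + a ^ 2 := by positivity
  have hsA : Real.sqrt (1 + a ^ 2) ^ 2 = 1 + a ^ 2 := Real.sq_sqrt hApos.le
  have hsApos : 0 < Real.sqrt (1 + a ^ 2) := Real.sqrt_pos.mpr hApos
  set x : ℝ → ℝ := fun t => (qt t).1 with hxdef
  set y : ℝ → ℝ := fun t => (qt t).2 with hydef
  set u : ℝ → ℝ := fun t => (deriv qt t).1 with hudef
  set v : ℝ → ℝ := fun t => (deriv qt t).2 with hvdef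
  have hx : ∀ s, HasDerivAt x (u s) s := fun s => hasDerivAt_fst' (hdq s).hasDerivAt
  have hy : ∀ s, HasDerivAt y (v s) s := fun s => hasDerivAt_snd' (hdq s).hasDerivAt
  have hu : ∀ s, HasDerivAt u ((deriv (deriv qt) s).1) s :=
    fun s => hasDerivAt_fst' (hd2 s).hasDerivAt
  have hv : ∀ s, HasDerivAt v ((deriv (deriv qt) s).2) s :=
    fun s => hasDerivAt_snd' (hd2 s).hasDerivAt
  have hw1 : ∀ s, 0 < (y s - a) ^ 2 + (1 + a ^ 2) * (x s) ^ 2 := by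
    intro s
    rcases eq_or_ne (x s) 0 with h | h
    · have hy' : y s - a ≠ 0 := by
        intro h2
        exact hne₁ s (Prod.ext h (by simpa [hydef, sub_eq_zero] using h2))
      have : 0 < (y s - a) ^ 2 := by positivity
      nlinarith [sq_nonneg (x s)]
    · nlinarith [sq_nonneg (y s - a), sq_pos_iff.mpr h, hApos]
  have hw2 : ∀ s, 0 < (y s + a) ^ 2 + (1 + a ^ 2) * (x s) ^ 2 := by
    intro s
    rcases eq_or_ne (x s) 0 with h | h
    · have hy' : y s + a ≠ 0 := by
        intro h2
        refine hne₂ s (Prod.ext h ?_)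
        show y s = -a
        linarith
      have : 0 < (y s + a) ^ 2 := by positivity
      nlinarith [sq_nonneg (x s)]
    · nlinarith [sq_nonneg (y s + a), sq_pos_iff.mpr h, hApos]
  set D1 : ℝ → ℝ := fun s => Real.sqrt ((y s - a) ^ 2 + (1 + a ^ 2) * (x s) ^ 2) with hD1def
  set D2 : ℝ → ℝ := fun s => Real.sqrt ((y s + a) ^ 2 + (1 + a ^ 2) * (x s) ^ 2) with hD2def
  have hD1pos : ∀ s, 0 < D1 s := fun s => Real.sqrt_pos.mpr (hw1 s)
  have hD2pos : ∀ s, 0 < D2 s := fun s => Real.sqrt_pos.mpr (hw2 s)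
  have hn1 : ∀ s, m₁ / (normA a (qt s - (0, a))) ^ 3 = mhat₁ * (1 + a ^ 2) / (D1 s) ^ 3 := by
    intro s
    have h1 : normA a (qt s - (0, a)) = D1 s / Real.sqrt (1 + a ^ 2) := by
      have h2 : (qt s - (0, a)).1 ^ 2 + (qt s - (0, a)).2 ^ 2 / (1 + a ^ 2)
          = ((y s - a) ^ 2 + (1 + a ^ 2) * (x s) ^ 2) / (1 + a ^ 2) := by
        simp only [Prod.fst_sub, Prod.snd_sub]
        field_simp
        ring
      rw [normA, h2, Real.sqrt_div (hw1 s).le]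
    rw [h1, div_pow, div_div_eq_mul_div, hm₁]
    rw [show Real.sqrt (1 + a ^ 2) ^ 3 = (1 + a ^ 2) * Real.sqrt (1 + a ^ 2) by
      rw [pow_succ, hsA]]
    ring
  have hn2 : ∀ s, m₂ / (normA a (qt s - (0, -a))) ^ 3 = mhat₂ * (1 + a ^ 2) / (D2 s) ^ 3 := by
    intro s
    have h1 : normA a (qt s - (0, -a)) = D2 s / Real.sqrt (1 + a ^ 2) := by
      have h2 : (qt s - (0, -a)).1 ^ 2 + (qt s - (0, -a)).2 ^ 2 / (1 + a ^ 2)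
          = ((y s + a) ^ 2 + (1 + a ^ 2) * (x s) ^ 2) / (1 + a ^ 2) := by
        simp only [Prod.fst_sub, Prod.snd_sub]
        field_simp
        ring
      rw [normA, h2, Real.sqrt_div (hw2 s).le]
    rw [h1, div_pow, div_div_eq_mul_div, hm₂]
    rw [show Real.sqrt (1 + a ^ 2) ^ 3 = (1 + a ^ 2) * Real.sqrt (1 + a ^ 2) by
      rw [pow_succ, hsA]]
    ring
  have hODE1 : ∀ s, (deriv (deriv qt) s).1
      = -(mhat₁ * (1 + a ^ 2) / (D1 s) ^ 3) * x s - (mhat₂ * (1 + a ^ 2) / (D2 s) ^ 3) * x s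
        + 2 * f * x s := by
    intro s
    have h := congrArg Prod.fst (hODE s)
    simp only [Prod.fst_sub, Prod.fst_add, Prod.smul_fst, smul_eq_mul] at h
    rw [h, hn1 s, hn2 s]
    show _ * (x s - 0) - _ * (x s - 0) + _ * x s = _
    ring
  have hODE2 : ∀ s, (deriv (deriv qt) s).2
      = -(mhat₁ * (1 + a ^ 2) / (D1 s) ^ 3) * (y s - a)
        - (mhat₂ * (1 + a ^ 2) / (D2 s) ^ 3) * (y s + a) + 2 * f * y s := by
    intro s
    have h := congrArg Prod.snd (hODE s)
    simp only [Prod.snd_sub, Prod.snd_add, Prod.smul_snd, smul_eq_mul] at h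
    rw [h, hn1 s, hn2 s]
    show _ * (y s - a) - _ * (y s - -a) + _ * y s = _
    ring
  set F : ℝ → ℝ := fun s => Esp a mhat₁ mhat₂ f (x s) (y s) (u s) (v s) with hFdef
  have hF0 : ∀ s, HasDerivAt F 0 s := by
    intro s
    have hu' := hu s
    have hv' := hv s
    rw [hODE1 s] at hu'
    rw [hODE2 s] at hv'
    -- kinetic part
    have t1 := (((hy s).pow 2).const_add 1).mul (hu'.pow 2)
    have t2 := ((((hx s).const_mul 2).mul (hy s)).mul hu').mul hv'
    have t3 := (((hx s).pow 2).const_add 1).mul (hv'.pow 2)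
    have hK := ((t1.sub t2).add t3).div_const 2
    -- potential parts
    have hP1 := pot_hasDerivAt mhat₁ a (hx s) (hy s) (hw1 s)
    have hw2' : 0 < (y s - -a) ^ 2 + (1 + (-a) ^ 2) * (x s) ^ 2 := by
      have h := hw2 s
      have e : (y s - -a) ^ 2 + (1 + (-a) ^ 2) * (x s) ^ 2
          = (y s + a) ^ 2 + (1 + a ^ 2) * (x s) ^ 2 := by ring
      rw [e]; exact h
    have hP2 := pot_hasDerivAt mhat₂ (-a) (hx s) (hy s) hw2'
    -- f part
    have hf' := (((hx s).pow 2).add ((hy s).pow 2)).const_mul f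
    have hE := ((hK.sub hP1).sub hP2).sub hf'
    -- identify the function with F
    have hfun : (fun t => ((1 + y t ^ 2) * u t ^ 2 - 2 * x t * y t * u t * v t
          + (1 + x t ^ 2) * v t ^ 2) / 2
        - mhat₁ * (a * y t + 1) / Real.sqrt ((y t - a) ^ 2 + (1 + a ^ 2) * (x t) ^ 2)
        - mhat₂ * (-a * y t + 1) / Real.sqrt ((y t - -a) ^ 2 + (1 + (-a) ^ 2) * (x t) ^ 2)
        - f * ((x t) ^ 2 + (y t) ^ 2)) = F := by
      funext t
      rw [hFdef]
      show _ = Esp _ _ _ _ _ _ _ _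
      rw [Esp]
      rw [show (y t - -a) ^ 2 + (1 + (-a) ^ 2) * (x t) ^ 2
          = (y t + a) ^ 2 + (1 + a ^ 2) * (x t) ^ 2 from by ring]
      ring_nf
    rw [← hfun]
    refine hE.congr_deriv ?_
    symm
    rw [show (y s - -a) ^ 2 + (1 + (-a) ^ 2) * (x s) ^ 2
        = (y s + a) ^ 2 + (1 + a ^ 2) * (x s) ^ 2 from by ring]
    have h1ne : Real.sqrt ((y s - a) ^ 2 + (1 + a ^ 2) * (x s) ^ 2) ≠ 0 :=
      (Real.sqrt_pos.mpr (hw1 s)).ne'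
    have h2ne : Real.sqrt ((y s + a) ^ 2 + (1 + a ^ 2) * (x s) ^ 2) ≠ 0 :=
      (Real.sqrt_pos.mpr (hw2 s)).ne'
    simp only [Pi.pow_apply, Pi.mul_apply, hD1def, hD2def]
    field_simp
    ring
  have hconst : ∀ s₁ s₂ : ℝ, F s₁ = F s₂ :=
    fun s₁ s₂ => is_const_of_deriv_eq_zero
      (fun t => (hF0 t).differentiableAt) (fun t => (hF0 t).deriv) s₁ s₂
  intro s₁ s₂
  have e1 : ∀ t : ℝ, deriv (fun w => (qt w).1) t = u t := fun t => (hx t).deriv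
  have e2 : ∀ t : ℝ, deriv (fun w => (qt w).2) t = v t := fun t => (hy t).deriv
  rw [e1 s₁, e1 s₂, e2 s₁, e2 s₂]
  exact hconst s₁ s₂
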